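/- For two distinct groups T_j, T_k of three relatively-consecutive small items in a random permutation of n items (m small), the probability that both groups appear consecutively equals m(m−1)(m−2)(m−3)/(n(n−1)(n−2)(n−3)), and hence Cov(Y_σ^{(j)}, Y_σ^{(k)}) = m(m−1)(m−2)(m−3)/(n(n−1)(n−2)(n−3)) − m²(m−1)²/(n²(n−1)²). -/

import Mathlib

/-- The positions (in increasing order) of the small items (items with label `< m`)
in the arrangement given by the permutation `σ` of `n` items. -/
noncomputable def smallPositions (n m : ℕ) (σ : Equiv.Perm (Fin n)) : List ℕ :=
  ((Finset.univ.filter (fun p : Fin n => (σ p : ℕ) < m)).sort (· ≤ ·)).map Fin.val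

/-- The `i`-th group of three relatively-consecutive small items occupies three
consecutive positions of the permutation `σ`. -/
noncomputable def Triplet (n m i : ℕ) (σ : Equiv.Perm (Fin n)) : Prop :=
  (smallPositions n m σ).getD (3 * i + 1) 0 = (smallPositions n m σ).getD (3 * i) 0 + 1 ∧
  (smallPositions n m σ).getD (3 * i + 2) 0 = (smallPositions n m σ).getD (3 * i) 0 + 2


open Finset

namespace TripAux

variable {n m : ℕ}

/-- sorted positions accessor -/
def gd (n : ℕ) (S : Finset (Fin n)) (p : ℕ) : ℕ := ((S.sort (· ≤ ·)).map Fin.val).getD p 0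

lemma gd_eq (S : Finset (Fin n)) (h : S.card = m) {p : ℕ} (hp : p < m) :
    gd n S p = (S.orderEmbOfFin h ⟨p, hp⟩ : ℕ) := by
  have hl : ((S.sort (· ≤ ·)).map Fin.val).length = m := by
    simp [h]
  rw [gd, List.getD_eq_getElem _ _ (by omega), List.getElem_map,
    Finset.orderEmbOfFin_apply]
  simp [Fin.getElem_fin]

lemma gd_image (f : Fin m → Fin n) (hf : StrictMono f) {p : ℕ} (hp : p < m) :
    gd n (Finset.image f univ) p = (f ⟨p, hp⟩ : ℕ) := by
  have hc : (Finset.image f univ).card = m := by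
    rw [Finset.card_image_of_injective _ hf.injective, card_univ, Fintype.card_fin]
  rw [gd_eq _ hc hp]
  congr 1
  exact (congrFun (Finset.orderEmbOfFin_unique hc (fun x => Finset.mem_image_of_mem f (mem_univ x)) hf) ⟨p, hp⟩).symm

end TripAux

namespace TripAux

lemma card_gaps (A : Finset ℕ) (s : ℕ) :
    Nat.card {g : ℕ → ℕ // (∀ q ∉ A, g q = 0) ∧ ∑ q ∈ A, g q = s}
      = (A.card + s - 1).choose s := by
  classical
  have e1 : {g : ℕ → ℕ // (∀ q ∉ A, g q = 0) ∧ ∑ q ∈ A, g q = s}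
      ≃ {h : ↥A → ℕ // ∑ a : A, h a = s} :=
  { toFun := fun g => ⟨fun a => g.1 a.1, by
      rw [Finset.sum_coe_sort A (fun q => g.1 q)]; exact g.2.2⟩
    invFun := fun h => ⟨fun q => if hq : q ∈ A then h.1 ⟨q, hq⟩ else 0,
      fun q hq => dif_neg hq, by
        rw [← Finset.sum_coe_sort A (fun q => if hq : q ∈ A then h.1 ⟨q, hq⟩ else 0)]
        simpa using h.2⟩
    left_inv := fun g => by
      ext q
      by_cases hq : q ∈ A
      · simp [hq]
      · simp [hq, g.2.1 q hq]
    right_inv := fun h => by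
      ext a
      simp }
  have e2 : {h : ↥A → ℕ // ∑ a : A, h a = s}
      ≃ {M : Multiset ↥A // Multiset.card M = s} := by
    refine Equiv.subtypeEquiv
      ((Finsupp.equivFunOnFinite).symm.trans Finsupp.orderIsoMultiset.toEquiv) (fun h => ?_)
    show _ ↔ Multiset.card (Finsupp.toMultiset _) = s
    rw [Finsupp.card_toMultiset, Finsupp.sum_fintype _ _ (fun _ => rfl)]
    simp
  rw [Nat.card_congr (e1.trans e2)]
  have : Nat.card {M : Multiset ↥A // Multiset.card M = s} = Nat.card (Sym ↥A s) := rfl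
  rw [this, Nat.card_eq_fintype_card, Sym.card_sym_eq_choose, Fintype.card_coe]

end TripAux

namespace TripAux

def Fg (g : ℕ → ℕ) (p : ℕ) : ℕ := p + ∑ q ∈ Finset.range (p+1), g q

lemma Fg_succ (g : ℕ → ℕ) (p : ℕ) : Fg g (p+1) = Fg g p + 1 + g (p+1) := by
  simp [Fg, Finset.sum_range_succ]; omega

lemma Fg_zero (g : ℕ → ℕ) : Fg g 0 = g 0 := by simp [Fg]

lemma Fg_strictMono (g : ℕ → ℕ) : StrictMono (Fg g) :=
  strictMono_nat_of_lt_succ (fun p => by rw [Fg_succ]; omega)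

lemma card_constrained (hm : 1 ≤ m) (hmn : m ≤ n) (B : Finset ℕ)
    (hB : ∀ b ∈ B, 1 ≤ b ∧ b < m) :
    Nat.card {S : Finset (Fin n) // S.card = m ∧ ∀ b ∈ B, gd n S b = gd n S (b-1) + 1}
      = (n - B.card).choose (n - m) := by
  classical
  set A : Finset ℕ := Finset.range (m+1) \ B with hAdef
  have hmemA : ∀ q, q ∈ A ↔ q < m + 1 ∧ q ∉ B := by
    intro q; simp [hAdef, Finset.mem_sdiff, Finset.mem_range]
  have hBsub : B ⊆ Finset.range (m+1) := fun b hb => Finset.mem_range.2 (by have := hB b hb; omega)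
  have hAcard : A.card = m + 1 - B.card := by
    rw [hAdef, Finset.card_sdiff_of_subset hBsub, Finset.card_range]
  have hBcard : B.card ≤ m := by
    calc B.card ≤ (Finset.range m).card :=
          Finset.card_le_card (fun b hb => Finset.mem_range.2 (hB b hb).2)
    _ = m := Finset.card_range m
  set G := {g : ℕ → ℕ // (∀ q ∉ A, g q = 0) ∧ ∑ q ∈ A, g q = n - m} with hG
  have hsumA : ∀ g : G, ∑ q ∈ Finset.range (m+1), g.1 q = n - m := by
    intro g
    rw [← Finset.sum_subset (show A ⊆ Finset.range (m+1) from hAdef ▸ Finset.sdiff_subset)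
      (fun x _ hxA => g.2.1 x hxA)]
    exact g.2.2
  have hbnd : ∀ (g : G) (p : Fin m), Fg g.1 p < n := by
    intro g p
    have h1 : Fg g.1 p ≤ Fg g.1 (m-1) := (Fg_strictMono g.1).monotone (by omega)
    have h2 : Fg g.1 (m-1) = (m-1) + ∑ q ∈ Finset.range m, g.1 q := by
      rw [Fg, show m - 1 + 1 = m from by omega]
    have h3 : ∑ q ∈ Finset.range m, g.1 q ≤ ∑ q ∈ Finset.range (m+1), g.1 q :=
      Finset.sum_le_sum_of_subset (Finset.range_subset_range.2 (by omega))
    have h4 := hsumA g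
    omega
  have hmono : ∀ g : G, StrictMono (fun p : Fin m => (⟨Fg g.1 p, hbnd g p⟩ : Fin n)) := by
    intro g p q hpq
    simpa [Fin.lt_def] using Fg_strictMono g.1 (show (p:ℕ) < q from hpq)
  have hcard : ∀ g : G,
      (Finset.image (fun p : Fin m => (⟨Fg g.1 p, hbnd g p⟩ : Fin n)) univ).card = m := by
    intro g
    rw [Finset.card_image_of_injective _ (hmono g).injective, card_univ, Fintype.card_fin]
  have hgd : ∀ (g : G) (p : ℕ) (hp : p < m),
      gd n (Finset.image (fun p : Fin m => (⟨Fg g.1 p, hbnd g p⟩ : Fin n)) univ) p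
        = Fg g.1 p := by
    intro g p hp
    rw [gd_image _ (hmono g) hp]
  have hconsP : ∀ (g : G), ∀ b ∈ B,
      gd n (Finset.image (fun p : Fin m => (⟨Fg g.1 p, hbnd g p⟩ : Fin n)) univ) b
        = gd n (Finset.image (fun p : Fin m => (⟨Fg g.1 p, hbnd g p⟩ : Fin n)) univ) (b-1)
          + 1 := by
    intro g b hb
    obtain ⟨hb1, hb2⟩ := hB b hb
    rw [hgd g b hb2, hgd g (b-1) (by omega)]
    have hzero : g.1 b = 0 := g.2.1 b (by rw [hmemA]; push_neg; intro _; exact hb)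
    have := Fg_succ g.1 (b-1)
    rw [show b - 1 + 1 = b from by omega] at this
    omega
  let Φ : G → {S : Finset (Fin n) // S.card = m ∧ ∀ b ∈ B, gd n S b = gd n S (b-1) + 1} :=
    fun g => ⟨Finset.image (fun p : Fin m => (⟨Fg g.1 p, hbnd g p⟩ : Fin n)) univ,
      hcard g, hconsP g⟩
  have hinj : Function.Injective Φ := by
    intro g g' h
    have himg : Finset.image (fun p : Fin m => (⟨Fg g.1 p, hbnd g p⟩ : Fin n)) univ
        = Finset.image (fun p : Fin m => (⟨Fg g'.1 p, hbnd g' p⟩ : Fin n)) univ :=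
      Subtype.ext_iff.mp h
    have hFeq : ∀ p, p < m → Fg g.1 p = Fg g'.1 p := by
      intro p hp
      rw [← hgd g p hp, ← hgd g' p hp, himg]
    have e1 := hsumA g
    have e2 := hsumA g'
    rw [Finset.sum_range_succ] at e1 e2
    have h3 : ∑ q ∈ Finset.range m, g.1 q = ∑ q ∈ Finset.range m, g'.1 q := by
      have h1 := hFeq (m-1) (by omega)
      rw [Fg, Fg, show m - 1 + 1 = m from by omega] at h1
      omega
    ext q
    rcases Nat.lt_or_ge q m with hq | hq
    · match q, hq with
      | 0, hq =>
        have := hFeq 0 hq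
        rwa [Fg_zero, Fg_zero] at this
      | (p+1), hq =>
        have h1 := hFeq (p+1) hq
        have h2 := hFeq p (by omega)
        rw [Fg_succ, Fg_succ, h2] at h1
        omega
    · rcases Nat.eq_or_lt_of_le hq with hq2 | hq2
      · subst hq2; omega
      · have z1 : g.1 q = 0 := g.2.1 q (by rw [hmemA]; push_neg; intro h; omega)
        have z2 : g'.1 q = 0 := g'.2.1 q (by rw [hmemA]; push_neg; intro h; omega)
        omega
  have hsurj : Function.Surjective Φ := by
    rintro ⟨S, hScard, hScons⟩
    set f : ℕ → ℕ := fun p => gd n S p with hf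
    have hstep : ∀ p, p + 1 < m → f p < f (p+1) := by
      intro p hp
      rw [hf]
      simp only
      rw [gd_eq S hScard (show p < m by omega), gd_eq S hScard hp]
      exact (S.orderEmbOfFin hScard).strictMono (show (⟨p, by omega⟩ : Fin m) < ⟨p+1, hp⟩ from by
        simp [Fin.lt_def])
    have hlt : ∀ p, p < m → f p < n := by
      intro p hp
      rw [hf]; simp only
      rw [gd_eq S hScard hp]
      exact (S.orderEmbOfFin hScard ⟨p, hp⟩).2
    have hge : ∀ p, p < m → p ≤ f p := by
      intro p
      induction p with
      | zero => omega
      | succ p ih => intro hp; have := hstep p hp; have := ih (by omega); omega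
    set g : ℕ → ℕ := fun q =>
      if q = 0 then f 0 else if q < m then f q - f (q-1) - 1
      else if q = m then (n-1) - f (m-1) else 0 with hgdef
    have hgm : g m = (n-1) - f (m-1) := by
      rw [hgdef]; simp only
      rw [if_neg (by omega), if_neg (by omega)]; simp
    have hFgf : ∀ p, p < m → Fg g p = f p := by
      intro p
      induction p with
      | zero =>
        intro _
        rw [Fg_zero]; simp [hgdef]
      | succ p ih =>
        intro hp
        rw [Fg_succ, ih (by omega)]
        have hs := hstep p hp
        have : g (p+1) = f (p+1) - f p - 1 := by
          rw [hgdef]; simp only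
          rw [if_neg (by omega), if_pos hp, Nat.add_sub_cancel]
        omega
    have hsupp : ∀ q ∉ A, g q = 0 := by
      intro q hq
      rw [hmemA] at hq
      push_neg at hq
      by_cases hqB : q ∈ B
      · obtain ⟨h1, h2⟩ := hB q hqB
        have hc := hScons q hqB
        rw [hgdef]; simp only
        rw [if_neg (by omega), if_pos h2]
        have : f q = f (q-1) + 1 := hc
        omega
      · have hq2 : ¬ q < m + 1 := fun h => hqB (hq h)
        rw [hgdef]; simp only
        rw [if_neg (by omega), if_neg (by omega), if_neg (by omega)]
    have hsum : ∑ q ∈ A, g q = n - m := by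
      rw [Finset.sum_subset (show A ⊆ Finset.range (m+1) from hAdef ▸ Finset.sdiff_subset)
        (fun x _ hxA => hsupp x hxA)]
      rw [Finset.sum_range_succ]
      have h1 : ∑ q ∈ Finset.range m, g q = f (m-1) - (m-1) := by
        have := hFgf (m-1) (by omega)
        rw [Fg, show m - 1 + 1 = m from by omega] at this
        omega
      have h2 := hge (m-1) (by omega)
      have h3 := hlt (m-1) (by omega)
      omega
    refine ⟨⟨g, hsupp, hsum⟩, ?_⟩
    apply Subtype.ext
    show Finset.image _ univ = S
    have hfun : (fun p : Fin m => (⟨Fg g p, hbnd ⟨g, hsupp, hsum⟩ p⟩ : Fin n))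
        = fun p : Fin m => S.orderEmbOfFin hScard p := by
      funext p
      apply Fin.ext
      show Fg g p.1 = _
      rw [hFgf p.1 p.2]
      rw [hf]; simp only
      rw [gd_eq S hScard p.2]
    rw [hfun]
    rw [← Finset.coe_inj, Finset.coe_image, Finset.coe_univ, Set.image_univ]
    exact Finset.range_orderEmbOfFin S hScard
  rw [← Nat.card_eq_of_bijective Φ ⟨hinj, hsurj⟩, hG, card_gaps]
  congr 1
  omega

end TripAux

namespace TripAux

lemma filter_lt_card (hmn : m ≤ n) :
    (univ.filter fun y : Fin n => (y : ℕ) < m).card = m := by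
  have : (univ.filter fun y : Fin n => (y : ℕ) < m)
      = Finset.image (Fin.castLE hmn) univ := by
    ext y
    simp only [Finset.mem_filter, Finset.mem_image, mem_univ, true_and]
    constructor
    · intro hy; exact ⟨⟨y, hy⟩, rfl⟩
    · rintro ⟨x, _, rfl⟩; exact x.2
  rw [this, Finset.card_image_of_injective _ (Fin.castLE_injective hmn), card_univ,
    Fintype.card_fin]

lemma card_small (hmn : m ≤ n) (σ : Equiv.Perm (Fin n)) :
    (univ.filter fun p : Fin n => (σ p : ℕ) < m).card = m := by
  have : (univ.filter fun p : Fin n => (σ p : ℕ) < m)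
      = Finset.image σ.symm (univ.filter fun y : Fin n => (y : ℕ) < m) := by
    ext p
    simp only [Finset.mem_filter, Finset.mem_image, mem_univ, true_and]
    constructor
    · intro hp; exact ⟨σ p, hp, by simp⟩
    · rintro ⟨q, hq, rfl⟩; simpa using hq
  rw [this, Finset.card_image_of_injective _ σ.symm.injective, filter_lt_card hmn]

lemma card_fiber (hmn : m ≤ n) (S : Finset (Fin n)) (hS : S.card = m) :
    Nat.card {σ : Equiv.Perm (Fin n) // (univ.filter fun p => ((σ p : ℕ) < m)) = S}
      = m.factorial * (n - m).factorial := by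
  classical
  have hprop : ∀ σ : Equiv.Perm (Fin n),
      ((univ.filter fun p => ((σ p : ℕ) < m)) = S) ↔ (∀ p, (σ p : ℕ) < m ↔ p ∈ S) := by
    intro σ
    rw [Finset.ext_iff]
    apply forall_congr'
    intro p
    simp
  have e0 : {σ : Equiv.Perm (Fin n) // (univ.filter fun p => ((σ p : ℕ) < m)) = S}
      ≃ {σ : Equiv.Perm (Fin n) // ∀ p, (σ p : ℕ) < m ↔ p ∈ S} :=
    Equiv.subtypeEquivRight hprop
  have e1 : {σ : Equiv.Perm (Fin n) // ∀ p, (σ p : ℕ) < m ↔ p ∈ S}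
      ≃ (({x : Fin n // x ∈ S} ≃ {y : Fin n // (y : ℕ) < m})
          × ({x : Fin n // x ∉ S} ≃ {y : Fin n // ¬ (y : ℕ) < m})) :=
  { toFun := fun σ =>
      (⟨fun x => ⟨σ.1 x, (σ.2 x).mpr x.2⟩,
        fun y => ⟨σ.1.symm y, (σ.2 (σ.1.symm y)).mp (by simpa using y.2)⟩,
        fun x => by simp, fun y => by simp⟩,
       ⟨fun x => ⟨σ.1 x, fun h => x.2 ((σ.2 x).mp h)⟩,
        fun y => ⟨σ.1.symm y, fun hmem => y.2 (by simpa using (σ.2 (σ.1.symm y)).mpr hmem)⟩,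
        fun x => by simp, fun y => by simp⟩)
    invFun := fun ab =>
      ⟨((Equiv.sumCompl (· ∈ S)).symm.trans ((ab.1.sumCongr ab.2).trans
          (Equiv.sumCompl fun y : Fin n => (y : ℕ) < m))), by
        intro p
        by_cases hp : p ∈ S
        · simp [Equiv.sumCompl_symm_apply_of_pos hp, hp, (ab.1 ⟨p, hp⟩).2]
        · simp only [Equiv.trans_apply, Equiv.sumCompl_symm_apply_of_neg hp,
            Equiv.sumCongr_apply, Sum.map_inr, Equiv.sumCompl_apply_inr]
          exact iff_of_false (ab.2 ⟨p, hp⟩).2 hp⟩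
    left_inv := fun σ => by
      apply Subtype.ext
      apply Equiv.ext
      intro p
      by_cases hp : p ∈ S
      · simp [Equiv.sumCompl_symm_apply_of_pos hp]
      · simp [Equiv.sumCompl_symm_apply_of_neg hp]
    right_inv := fun ab => by
      apply Prod.ext
      · apply Equiv.ext
        intro x
        apply Subtype.ext
        simp [Equiv.sumCompl_symm_apply_of_pos x.2]
      · apply Equiv.ext
        intro x
        apply Subtype.ext
        simp [Equiv.sumCompl_symm_apply_of_neg x.2] }
  rw [Nat.card_congr (e0.trans e1), Nat.card_eq_fintype_card, Fintype.card_prod]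
  have c1 : Fintype.card {x : Fin n // x ∈ S} = m := by
    rw [Fintype.card_coe, hS]
  have c2 : Fintype.card {y : Fin n // (y : ℕ) < m} = m := by
    rw [Fintype.card_subtype, filter_lt_card hmn]
  have c3 : Fintype.card {x : Fin n // x ∉ S} = n - m := by
    rw [Fintype.card_subtype_compl, Fintype.card_fin, c1]
  have c4 : Fintype.card {y : Fin n // ¬ (y : ℕ) < m} = n - m := by
    rw [Fintype.card_subtype_compl, Fintype.card_fin, c2]
  rw [Fintype.card_equiv (Fintype.equivOfCardEq (c1.trans c2.symm)),
    Fintype.card_equiv (Fintype.equivOfCardEq (c3.trans c4.symm)), c1, c3]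

end TripAux

namespace TripAux

lemma card_perm_event (hmn : m ≤ n) (Q : Finset (Fin n) → Prop) :
    Nat.card {σ : Equiv.Perm (Fin n) // Q (univ.filter fun p => ((σ p : ℕ) < m))}
      = Nat.card {S : Finset (Fin n) // S.card = m ∧ Q S}
          * (m.factorial * (n - m).factorial) := by
  classical
  have e : {σ : Equiv.Perm (Fin n) // Q (univ.filter fun p => ((σ p : ℕ) < m))}
      ≃ (Σ S : {S : Finset (Fin n) // S.card = m ∧ Q S},
          {σ : Equiv.Perm (Fin n) // (univ.filter fun p => ((σ p : ℕ) < m)) = S.1}) :=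
  { toFun := fun x => ⟨⟨univ.filter fun p => ((x.1 p : ℕ) < m), card_small hmn x.1, x.2⟩,
      x.1, rfl⟩
    invFun := fun y => ⟨y.2.1, by rw [y.2.2]; exact y.1.2.2⟩
    left_inv := fun x => rfl
    right_inv := fun y => by
      rcases y with ⟨⟨S, hS⟩, σ, hσ⟩
      simp only at hσ
      subst hσ
      rfl }
  rw [Nat.card_congr e, Nat.card_eq_fintype_card, Fintype.card_sigma]
  have : ∀ S : {S : Finset (Fin n) // S.card = m ∧ Q S},
      Fintype.card {σ : Equiv.Perm (Fin n) // (univ.filter fun p => ((σ p : ℕ) < m)) = S.1}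
        = m.factorial * (n - m).factorial := by
    intro S
    rw [← Nat.card_eq_fintype_card]
    exact card_fiber hmn S.1 S.2.1
  rw [Finset.sum_congr rfl (fun S _ => this S), Finset.sum_const, card_univ, smul_eq_mul,
    Nat.card_eq_fintype_card]

end TripAux

namespace TripAux

lemma key_choose (t : ℕ) (ht : t ≤ m) (hmn : m ≤ n) :
    (n - t).choose (m - t) * n.descFactorial t = n.choose m * m.descFactorial t := by
  induction t with
  | zero => simp
  | succ t ih =>
    have ht' : t ≤ m := by omega
    have hstep : (n - t) * ((n - t) - 1).choose ((m - t) - 1)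
        = (m - t) * (n - t).choose (m - t) := by
      have h := Nat.add_one_mul_choose_eq ((n - t) - 1) ((m - t) - 1)
      rw [show (n - t) - 1 + 1 = n - t from by omega,
        show (m - t) - 1 + 1 = m - t from by omega] at h
      rw [h]; ring
    rw [Nat.descFactorial_succ, Nat.descFactorial_succ,
      show n - (t+1) = (n - t) - 1 from by omega, show m - (t+1) = (m - t) - 1 from by omega]
    calc ((n-t)-1).choose ((m-t)-1) * ((n-t) * n.descFactorial t)
        = ((n-t) * ((n-t)-1).choose ((m-t)-1)) * n.descFactorial t := by ring
      _ = ((m-t) * (n-t).choose (m-t)) * n.descFactorial t := by rw [hstep]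
      _ = (m-t) * ((n-t).choose (m-t) * n.descFactorial t) := by ring
      _ = (m-t) * (n.choose m * m.descFactorial t) := by rw [ih ht']
      _ = n.choose m * ((m-t) * m.descFactorial t) := by ring

lemma card_perm_B (hm : 1 ≤ m) (hmn : m ≤ n) (B : Finset ℕ)
    (hB : ∀ b ∈ B, 1 ≤ b ∧ b < m) :
    Nat.card {σ : Equiv.Perm (Fin n) //
        ∀ b ∈ B, gd n (univ.filter fun p => ((σ p : ℕ) < m)) b
          = gd n (univ.filter fun p => ((σ p : ℕ) < m)) (b-1) + 1}
      = (n - B.card).choose (n - m) * (m.factorial * (n - m).factorial) := by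
  rw [card_perm_event hmn (fun S => ∀ b ∈ B, gd n S b = gd n S (b-1) + 1),
    card_constrained hm hmn B hB]

/-- probability for an event with `t` constraints -/
lemma prob_B (hm : 1 ≤ m) (hmn : m ≤ n) (B : Finset ℕ)
    (hB : ∀ b ∈ B, 1 ≤ b ∧ b < m) :
    (Nat.card {σ : Equiv.Perm (Fin n) //
        ∀ b ∈ B, gd n (univ.filter fun p => ((σ p : ℕ) < m)) b
          = gd n (univ.filter fun p => ((σ p : ℕ) < m)) (b-1) + 1} : ℝ)
      / (Nat.card (Equiv.Perm (Fin n)) : ℝ)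
      = (m.descFactorial B.card : ℝ) / (n.descFactorial B.card : ℝ) := by
  have hBm : B.card ≤ m := by
    calc B.card ≤ (Finset.range m).card :=
          Finset.card_le_card (fun b hb => Finset.mem_range.2 (hB b hb).2)
    _ = m := Finset.card_range m
  set t := B.card with htdef
  have hsymm : (n - t).choose (n - m) = (n - t).choose (m - t) := by
    rw [show n - m = (n - t) - (m - t) from by omega, Nat.choose_symm (by omega)]
  have hP : Nat.card (Equiv.Perm (Fin n)) = n.choose m * (m.factorial * (n-m).factorial) := by
    rw [Nat.card_eq_fintype_card, Fintype.card_perm, Fintype.card_fin,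
      ← Nat.choose_mul_factorial_mul_factorial hmn]
    ring
  rw [card_perm_B hm hmn B hB, hP, hsymm]
  have h1 : ((m.factorial : ℕ) : ℝ) * ((n-m).factorial : ℕ) ≠ 0 := by
    positivity
  have h2 : ((n.choose m : ℕ) : ℝ) ≠ 0 := by
    exact_mod_cast (Nat.choose_pos hmn).ne'
  have h3 : ((n.descFactorial t : ℕ) : ℝ) ≠ 0 := by
    have : n.descFactorial t ≠ 0 := by
      rw [Ne, Nat.descFactorial_eq_zero_iff_lt]; omega
    exact_mod_cast this
  have hkey := key_choose t hBm hmn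
  have hkeyR : ((n - t).choose (m - t) : ℝ) * (n.descFactorial t : ℝ)
      = (n.choose m : ℝ) * (m.descFactorial t : ℝ) := by exact_mod_cast congrArg Nat.cast hkey
  have h4 : ((n.choose m * (m.factorial * (n-m).factorial) : ℕ) : ℝ) ≠ 0 := by
    push_cast
    exact mul_ne_zero h2 h1
  rw [div_eq_div_iff h4 h3]
  push_cast
  push_cast at hkeyR
  linear_combination ((m.factorial : ℝ) * ((n-m).factorial : ℝ)) * hkeyR

end TripAux

namespace TripAux

lemma cast_desc {a : ℕ} (ha : 4 ≤ a) :
    ((a.descFactorial 4 : ℕ) : ℝ) = a*(a-1)*(a-2)*(a-3)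
      ∧ ((a.descFactorial 2 : ℕ) : ℝ) = a*(a-1) := by
  simp only [Nat.descFactorial_succ, Nat.descFactorial_zero, mul_one, Nat.sub_zero]
  constructor
  · rw [Nat.cast_mul, Nat.cast_mul, Nat.cast_mul,
      Nat.cast_sub (by omega : 3 ≤ a), Nat.cast_sub (by omega : 2 ≤ a),
      Nat.cast_sub (by omega : 1 ≤ a)]
    push_cast
    ring
  · rw [Nat.cast_mul, Nat.cast_sub (by omega : 1 ≤ a)]
    push_cast
    ring

end TripAux


/-- For two distinct triplet groups `T_j, T_k`, the probability that both appear
consecutively equals `m(m-1)(m-2)(m-3)/(n(n-1)(n-2)(n-3))`, and hence the covariance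
of the corresponding indicators equals this joint probability minus
`m²(m-1)²/(n²(n-1)²)`. -/
theorem triplet_pair_probability (n m j k : ℕ) (hmn : m ≤ n) (hjk : j ≠ k)
    (hj : 3 * j + 3 ≤ m) (hk : 3 * k + 3 ≤ m) :
    (Nat.card {σ : Equiv.Perm (Fin n) // Triplet n m j σ ∧ Triplet n m k σ} : ℝ) /
        (Nat.card (Equiv.Perm (Fin n)) : ℝ) =
      ((m : ℝ) * ((m : ℝ) - 1) * ((m : ℝ) - 2) * ((m : ℝ) - 3)) /
        ((n : ℝ) * ((n : ℝ) - 1) * ((n : ℝ) - 2) * ((n : ℝ) - 3)) ∧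
    (Nat.card {σ : Equiv.Perm (Fin n) // Triplet n m j σ ∧ Triplet n m k σ} : ℝ) /
          (Nat.card (Equiv.Perm (Fin n)) : ℝ) -
        ((Nat.card {σ : Equiv.Perm (Fin n) // Triplet n m j σ} : ℝ) /
            (Nat.card (Equiv.Perm (Fin n)) : ℝ)) *
          ((Nat.card {σ : Equiv.Perm (Fin n) // Triplet n m k σ} : ℝ) /
            (Nat.card (Equiv.Perm (Fin n)) : ℝ)) =
      ((m : ℝ) * ((m : ℝ) - 1) * ((m : ℝ) - 2) * ((m : ℝ) - 3)) /
          ((n : ℝ) * ((n : ℝ) - 1) * ((n : ℝ) - 2) * ((n : ℝ) - 3)) -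
        ((m : ℝ) ^ 2 * ((m : ℝ) - 1) ^ 2) / ((n : ℝ) ^ 2 * ((n : ℝ) - 1) ^ 2) := by
  classical
  open TripAux in
  have hm1 : 1 ≤ m := by omega
  have hm6 : 6 ≤ m := by omega
  have hn6 : 6 ≤ n := by omega
  set BJ : Finset ℕ := {3*j+1, 3*j+2, 3*k+1, 3*k+2} with hBJ
  set Bj : Finset ℕ := {3*j+1, 3*j+2} with hBj
  set Bk : Finset ℕ := {3*k+1, 3*k+2} with hBk
  have hBJprop : ∀ b ∈ BJ, 1 ≤ b ∧ b < m := by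
    intro b hb; simp [hBJ, hBj, hBk] at hb; omega
  have hBjprop : ∀ b ∈ Bj, 1 ≤ b ∧ b < m := by
    intro b hb; simp [hBj] at hb; omega
  have hBkprop : ∀ b ∈ Bk, 1 ≤ b ∧ b < m := by
    intro b hb; simp [hBk] at hb; omega
  have hBJcard : BJ.card = 4 := by
    rw [hBJ, hBk, Finset.card_insert_of_notMem (by simp <;> omega),
      Finset.card_insert_of_notMem (by simp <;> omega),
      Finset.card_insert_of_notMem (by simp <;> omega), Finset.card_singleton]
  have hBjcard : Bj.card = 2 := by
    rw [hBj, Finset.card_insert_of_notMem (by simp <;> omega), Finset.card_singleton]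
  have hBkcard : Bk.card = 2 := by
    rw [hBk, Finset.card_insert_of_notMem (by simp <;> omega), Finset.card_singleton]
  have hgdeq : ∀ (σ : Equiv.Perm (Fin n)) (p : ℕ),
      (smallPositions n m σ).getD p 0
        = TripAux.gd n (Finset.univ.filter fun q => ((σ q : ℕ) < m)) p := fun _ _ => rfl
  have hiffJ : ∀ σ : Equiv.Perm (Fin n),
      (Triplet n m j σ ∧ Triplet n m k σ)
      ↔ ∀ b ∈ BJ, TripAux.gd n (Finset.univ.filter fun p => ((σ p : ℕ) < m)) b
          = TripAux.gd n (Finset.univ.filter fun p => ((σ p : ℕ) < m)) (b-1) + 1 := by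
    intro σ
    unfold Triplet
    simp only [hgdeq, hBJ, hBj, hBk, Finset.mem_insert, Finset.mem_singleton, forall_eq_or_imp, forall_eq]
    rw [show 3*j+1-1 = 3*j from by omega, show 3*j+2-1 = 3*j+1 from by omega,
      show 3*k+1-1 = 3*k from by omega, show 3*k+2-1 = 3*k+1 from by omega]
    omega
  have hiffj : ∀ σ : Equiv.Perm (Fin n),
      (Triplet n m j σ)
      ↔ ∀ b ∈ Bj, TripAux.gd n (Finset.univ.filter fun p => ((σ p : ℕ) < m)) b
          = TripAux.gd n (Finset.univ.filter fun p => ((σ p : ℕ) < m)) (b-1) + 1 := by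
    intro σ
    unfold Triplet
    simp only [hgdeq, hBj, Finset.mem_insert, Finset.mem_singleton, forall_eq_or_imp, forall_eq]
    rw [show 3*j+1-1 = 3*j from by omega, show 3*j+2-1 = 3*j+1 from by omega]
    omega
  have hiffk : ∀ σ : Equiv.Perm (Fin n),
      (Triplet n m k σ)
      ↔ ∀ b ∈ Bk, TripAux.gd n (Finset.univ.filter fun p => ((σ p : ℕ) < m)) b
          = TripAux.gd n (Finset.univ.filter fun p => ((σ p : ℕ) < m)) (b-1) + 1 := by
    intro σ
    unfold Triplet
    simp only [hgdeq, hBk, Finset.mem_insert, Finset.mem_singleton, forall_eq_or_imp, forall_eq]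
    rw [show 3*k+1-1 = 3*k from by omega, show 3*k+2-1 = 3*k+1 from by omega]
    omega
  have hprobJ : (Nat.card {σ : Equiv.Perm (Fin n) // Triplet n m j σ ∧ Triplet n m k σ} : ℝ) /
      (Nat.card (Equiv.Perm (Fin n)) : ℝ)
      = ((m.descFactorial 4 : ℕ) : ℝ) / ((n.descFactorial 4 : ℕ) : ℝ) := by
    rw [Nat.card_congr (Equiv.subtypeEquivRight hiffJ), ← hBJcard]
    exact TripAux.prob_B hm1 hmn BJ hBJprop
  have hprobj : (Nat.card {σ : Equiv.Perm (Fin n) // Triplet n m j σ} : ℝ) /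
      (Nat.card (Equiv.Perm (Fin n)) : ℝ)
      = ((m.descFactorial 2 : ℕ) : ℝ) / ((n.descFactorial 2 : ℕ) : ℝ) := by
    rw [Nat.card_congr (Equiv.subtypeEquivRight hiffj), ← hBjcard]
    exact TripAux.prob_B hm1 hmn Bj hBjprop
  have hprobk : (Nat.card {σ : Equiv.Perm (Fin n) // Triplet n m k σ} : ℝ) /
      (Nat.card (Equiv.Perm (Fin n)) : ℝ)
      = ((m.descFactorial 2 : ℕ) : ℝ) / ((n.descFactorial 2 : ℕ) : ℝ) := by
    rw [Nat.card_congr (Equiv.subtypeEquivRight hiffk), ← hBkcard]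
    exact TripAux.prob_B hm1 hmn Bk hBkprop
  obtain ⟨hm4, hm2⟩ := TripAux.cast_desc (show 4 ≤ m by omega)
  obtain ⟨hn4, hn2⟩ := TripAux.cast_desc (show 4 ≤ n by omega)
  constructor
  · rw [hprobJ, hm4, hn4]
  · rw [hprobJ, hprobj, hprobk, hm4, hn4, hm2, hn2]
    have hnR : (6:ℝ) ≤ (n:ℝ) := by exact_mod_cast hn6
    have h0 : (n:ℝ) ≠ 0 := by linarith
    have h1 : (n:ℝ) - 1 ≠ 0 := by linarith
    have h2 : (n:ℝ) - 2 ≠ 0 := by linarith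
    have h3 : (n:ℝ) - 3 ≠ 0 := by linarith
    field_simp
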